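/- Let f:ℝ^d→ℝ be L-smooth and Σ∈ℝ^{d×d} be symmetric and invertible. Then for every x∈ℝ^d, ‖∇f(x)‖² ≤ 2‖∇f_Σ(x)‖² + (L²·‖Σ‖⁴·‖Σ^{-1}‖²·(3+d)³)/4; moreover the same inequality holds with the roles of ∇f and ∇f_Σ interchanged, i.e., ‖∇f_Σ(x)‖² ≤ 2‖∇f(x)‖² + (L²·‖Σ‖⁴·‖Σ^{-1}‖²·(3+d)³)/4. -/

import Mathlib

set_option maxHeartbeats 1000000
set_option synthInstance.maxHeartbeats 400000


open MeasureTheory Filter Matrix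

noncomputable section

abbrev Vec (d : ℕ) := EuclideanSpace ℝ (Fin d)

/-- Action of a `d × d` matrix on a vector in `ℝ^d`. -/
def mApp {d : ℕ} (S : Matrix (Fin d) (Fin d) ℝ) (u : Vec d) : Vec d :=
  Matrix.toEuclideanLin S u

/-- Anisotropic Gaussian smoothing of `f` by the matrix `S`:
`f_S(x) = π^{-d/2} ∫ f(x + S u) e^{-‖u‖²} du`. -/
def gsmooth {d : ℕ} (f : Vec d → ℝ) (S : Matrix (Fin d) (Fin d) ℝ) (x : Vec d) : ℝ :=
  (Real.pi ^ ((d : ℝ) / 2))⁻¹ * ∫ u : Vec d, f (x + mApp S u) * Real.exp (-‖u‖ ^ 2)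

/-- Operator (spectral) norm of a matrix, acting on Euclidean space. -/
def opNorm {d : ℕ} (S : Matrix (Fin d) (Fin d) ℝ) : ℝ :=
  ‖LinearMap.toContinuousLinearMap (Matrix.toEuclideanLin S)‖

-- pointwise helpers
lemma texp1 {t : ℝ} (ht : 0 ≤ t) : t * Real.exp (-t^2) ≤ Real.exp (-(1/2) * t^2) := by
  have h1 : t ≤ Real.exp ((1/2) * t^2) := by
    have := Real.add_one_le_exp ((1/2) * t^2)
    nlinarith
  calc t * Real.exp (-t^2) ≤ Real.exp ((1/2)*t^2) * Real.exp (-t^2) := by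
        exact mul_le_mul_of_nonneg_right h1 (Real.exp_pos _).le
    _ = Real.exp (-(1/2) * t^2) := by rw [← Real.exp_add]; ring_nf

lemma texp2 {t : ℝ} (ht : 0 ≤ t) : t^2 * Real.exp (-t^2) ≤ 2 * Real.exp (-(1/2) * t^2) := by
  have h1 : t^2 ≤ 2 * Real.exp ((1/2) * t^2) := by
    have := Real.add_one_le_exp ((1/2) * t^2)
    nlinarith
  calc t^2 * Real.exp (-t^2) ≤ (2 * Real.exp ((1/2)*t^2)) * Real.exp (-t^2) := by
        exact mul_le_mul_of_nonneg_right h1 (Real.exp_pos _).le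
    _ = 2 * Real.exp (-(1/2) * t^2) := by rw [mul_assoc, ← Real.exp_add]; ring_nf

lemma texp0 (t : ℝ) : Real.exp (-t^2) ≤ Real.exp (-(1/2) * t^2) := by
  apply Real.exp_le_exp.2; nlinarith [sq_nonneg t]

-- integrability of gaussian on Vec d
lemma integrable_gauss {d : ℕ} {b : ℝ} (hb : 0 < b) :
    Integrable (fun u : Vec d => Real.exp (-b * ‖u‖^2)) := by
  have h := GaussianFourier.integrable_cexp_neg_mul_sq_norm_add_of_euclideanSpace
    (ι := Fin d) (b := (b:ℂ)) (by simpa using hb) 0 0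
  simp only [zero_mul, add_zero] at h
  have := h.re
  refine this.congr (Filter.Eventually.of_forall fun u => ?_)
  show (Complex.exp (-(b:ℂ) * (‖u‖:ℂ)^2)).re = _
  rw [show ((-(b:ℂ)) * (‖u‖:ℂ)^2) = ((-b * ‖u‖^2 : ℝ) : ℂ) by push_cast; ring,
    Complex.exp_ofReal_re]

lemma integral_gauss_vec {d : ℕ} :
    ∫ u : Vec d, Real.exp (-‖u‖^2) = Real.pi ^ ((d:ℝ)/2) := by
  have h := GaussianFourier.integral_cexp_neg_mul_sq_norm_add_of_euclideanSpace
    (ι := Fin d) (b := (1:ℂ)) (by norm_num) 0 0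
  simp only [zero_mul, add_zero, neg_mul, one_mul, Complex.exp_zero, mul_one] at h
  have key : ∫ u : Vec d, ((Real.exp (-‖u‖^2) : ℝ) : ℂ) =
      ((Real.pi ^ ((d:ℝ)/2) : ℝ) : ℂ) := by
    rw [show (fun u : Vec d => ((Real.exp (-‖u‖^2) : ℝ) : ℂ)) =
        fun u : Vec d => Complex.exp (-((‖u‖:ℂ)^2)) by
      funext u
      rw [show (-((‖u‖:ℂ)^2)) = ((-‖u‖^2 : ℝ) : ℂ) by push_cast; ring,
        Complex.ofReal_exp]]
    rw [h, Complex.ofReal_cpow Real.pi_pos.le]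
    norm_num
  rw [← Complex.ofReal_inj, ← key]; exact (integral_ofReal).symm

lemma integral_Ioi_texp : ∫ t in Set.Ioi (0:ℝ), t * Real.exp (-t^2) = 1/2 := by
  have hderiv : ∀ t ∈ Set.Ioi (0:ℝ),
      HasDerivAt (fun t : ℝ => -(Real.exp (-t^2))/2) (t * Real.exp (-t^2)) t := by
    intro t _
    have h1 : HasDerivAt (fun t : ℝ => -t^2) (-(2*t)) t := by
      exact ((hasDerivAt_pow 2 t).neg).congr_deriv (by norm_num)
    have h2 := (Real.hasDerivAt_exp (-t^2)).comp t h1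
    have h3 := (h2.neg).div_const 2
    exact h3.congr_deriv (by ring)
  have hcont : ContinuousWithinAt (fun t : ℝ => -(Real.exp (-t^2))/2) (Set.Ici 0) 0 := by
    apply Continuous.continuousWithinAt; fun_prop
  have hint : IntegrableOn (fun t : ℝ => t * Real.exp (-t^2)) (Set.Ioi 0) := by
    have := integrable_mul_exp_neg_mul_sq (b := 1) one_pos
    simpa using this.integrableOn
  have htend : Tendsto (fun t : ℝ => -(Real.exp (-t^2))/2) atTop (nhds 0) := by
    have h0 : Tendsto (fun t : ℝ => Real.exp (-t^2)) atTop (nhds 0) := by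
      have := Real.tendsto_exp_neg_atTop_nhds_zero.comp
        (tendsto_pow_atTop (two_ne_zero) : Tendsto (fun t : ℝ => t^2) atTop atTop)
      simpa [Function.comp] using this
    have := (h0.neg).div_const 2
    simpa using this
  have := MeasureTheory.integral_Ioi_of_hasDerivAt_of_tendsto hcont hderiv hint htend
  rw [this]; norm_num

lemma integral_abs_texp : ∫ t : ℝ, |t| * Real.exp (-t^2) = 1 := by
  have h : (fun t : ℝ => |t| * Real.exp (-t^2)) =
      fun t : ℝ => |t| * Real.exp (-|t|^2) := by
    funext t; rw [sq_abs]
  rw [h, integral_comp_abs (f := fun t : ℝ => t * Real.exp (-t^2)),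
    integral_Ioi_texp]
  norm_num

lemma integral_vec_eq {d : ℕ} (g : Vec d → ℝ) :
    ∫ u : Vec d, g u =
      ∫ x : Fin d → ℝ, g ((MeasurableEquiv.toLp 2 (Fin d → ℝ)).symm.symm x) :=
  (MeasurePreserving.integral_comp'
    (MeasurePreserving.symm _ (EuclideanSpace.volume_preserving_symm_measurableEquiv_toLp (Fin d))) g).symm

lemma symm_apply_coord {d : ℕ} (x : Fin d → ℝ) (i : Fin d) :
    ((MeasurableEquiv.toLp 2 (Fin d → ℝ)).symm.symm x) i = x i := rfl

lemma norm_symm_sq {d : ℕ} (x : Fin d → ℝ) :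
    ‖(MeasurableEquiv.toLp 2 (Fin d → ℝ)).symm.symm x‖^2 = ∑ i, (x i)^2 := by
  rw [EuclideanSpace.norm_eq, Real.sq_sqrt (Finset.sum_nonneg fun i _ => sq_nonneg _)]
  simp [symm_apply_coord, sq_abs]

lemma sqrtpi_pow (d : ℕ) : Real.sqrt Real.pi ^ d = Real.pi ^ ((d:ℝ)/2) := by
  rw [Real.sqrt_eq_rpow, ← Real.rpow_natCast (Real.pi ^ ((1:ℝ)/2)) d,
    ← Real.rpow_mul Real.pi_pos.le]
  ring_nf

lemma integral_abs_coord {d : ℕ} (i₀ : Fin d) :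
    ∫ u : Vec d, |u i₀| * Real.exp (-‖u‖^2) ≤ Real.pi ^ ((d:ℝ)/2) := by
  rw [integral_vec_eq (fun u : Vec d => |u i₀| * Real.exp (-‖u‖^2))]
  have heq : (fun x : Fin d → ℝ =>
      |((MeasurableEquiv.toLp 2 (Fin d → ℝ)).symm.symm x) i₀| *
        Real.exp (-‖(MeasurableEquiv.toLp 2 (Fin d → ℝ)).symm.symm x‖^2)) =
      fun x => ∏ j, ((if j = i₀ then |x j| else 1) * Real.exp (-(x j)^2)) := by
    funext x
    rw [symm_apply_coord, norm_symm_sq, Finset.prod_mul_distrib, Finset.prod_ite_eq']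
    simp only [Finset.mem_univ, if_true]
    rw [← Real.exp_sum]
    congr 1
    rw [← Finset.sum_neg_distrib]
  rw [heq, MeasureTheory.integral_fintype_prod_volume_eq_prod
    (f := fun j t => (if j = i₀ then |t| else 1) * Real.exp (-t^2))]
  have hb : ∀ j : Fin d, (∫ t : ℝ, (if j = i₀ then |t| else 1) * Real.exp (-t^2))
      ≤ Real.sqrt Real.pi := by
    intro j
    by_cases hj : j = i₀
    · simp only [hj, if_true]
      rw [integral_abs_texp]
      rw [show (1:ℝ) = Real.sqrt 1 by simp]
      exact Real.sqrt_le_sqrt (by linarith [Real.pi_gt_three])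
    · simp only [hj, if_false, one_mul]
      have := integral_gaussian 1
      simp only [neg_mul, one_mul, div_one] at this
      rw [this]
  calc (∏ j : Fin d, ∫ t : ℝ, (if j = i₀ then |t| else 1) * Real.exp (-t^2))
      ≤ ∏ _j : Fin d, Real.sqrt Real.pi := by
        apply Finset.prod_le_prod
        · intro j _
          apply MeasureTheory.integral_nonneg
          intro t
          positivity
        · exact fun j _ => hb j
    _ = Real.pi ^ ((d:ℝ)/2) := by
        rw [Finset.prod_const, Finset.card_univ, Fintype.card_fin, sqrtpi_pow]

lemma vec_norm_le_sum_abs {d : ℕ} (u : Vec d) : ‖u‖ ≤ ∑ i, |u i| := by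
  rw [EuclideanSpace.norm_eq]
  have h := Finset.sum_sq_le_sq_sum_of_nonneg (s := Finset.univ)
    (f := fun i : Fin d => |u i|) (fun i _ => abs_nonneg _)
  calc Real.sqrt (∑ i, ‖u i‖^2) = Real.sqrt (∑ i, |u i|^2) := by
        simp [Real.norm_eq_abs]
    _ ≤ Real.sqrt ((∑ i, |u i|)^2) := Real.sqrt_le_sqrt h
    _ = ∑ i, |u i| := Real.sqrt_sq (Finset.sum_nonneg fun i _ => abs_nonneg _)

lemma integrable_norm_gauss {d : ℕ} :
    Integrable (fun u : Vec d => ‖u‖ * Real.exp (-‖u‖^2)) := by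
  apply (integrable_gauss (d := d) (b := 1/2) (by norm_num)).mono'
  · apply Continuous.aestronglyMeasurable; fun_prop
  · refine Filter.Eventually.of_forall fun u => ?_
    rw [Real.norm_eq_abs, abs_of_nonneg (by positivity)]
    exact texp1 (norm_nonneg u)

lemma integrable_abs_coord_gauss {d : ℕ} (i : Fin d) :
    Integrable (fun u : Vec d => |u i| * Real.exp (-‖u‖^2)) := by
  apply integrable_norm_gauss.mono'
  · apply Continuous.aestronglyMeasurable
    have hc : Continuous fun u : Vec d => u i :=
      (EuclideanSpace.proj (𝕜 := ℝ) i).continuous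
    fun_prop
  · refine Filter.Eventually.of_forall fun u => ?_
    rw [Real.norm_eq_abs, abs_of_nonneg (by positivity)]
    have : |u i| ≤ ‖u‖ := by
      have hn : ‖u‖^2 = ∑ j, |u j|^2 := by
        rw [EuclideanSpace.norm_eq,
          Real.sq_sqrt (Finset.sum_nonneg fun j _ => sq_nonneg _)]
        simp [Real.norm_eq_abs]
      have h2 : |u i|^2 ≤ ∑ j, |u j|^2 :=
        Finset.single_le_sum (f := fun j => |u j|^2) (fun j _ => sq_nonneg _)
          (Finset.mem_univ i)
      nlinarith [norm_nonneg u, abs_nonneg (u i)]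
    exact mul_le_mul_of_nonneg_right this (Real.exp_pos _).le

lemma integral_norm_gauss_le {d : ℕ} :
    ∫ u : Vec d, ‖u‖ * Real.exp (-‖u‖^2) ≤ d * Real.pi ^ ((d:ℝ)/2) := by
  have step1 : ∫ u : Vec d, ‖u‖ * Real.exp (-‖u‖^2)
      ≤ ∫ u : Vec d, ∑ i, |u i| * Real.exp (-‖u‖^2) := by
    apply MeasureTheory.integral_mono integrable_norm_gauss
    · exact MeasureTheory.integrable_finset_sum _ fun i _ => integrable_abs_coord_gauss i
    · intro u
      have := mul_le_mul_of_nonneg_right (vec_norm_le_sum_abs u)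
        (Real.exp_pos (-‖u‖^2)).le
      simpa [Finset.sum_mul] using this
  rw [MeasureTheory.integral_finset_sum _ (fun i _ => integrable_abs_coord_gauss i)] at step1
  calc ∫ u : Vec d, ‖u‖ * Real.exp (-‖u‖^2)
      ≤ ∑ _i : Fin d, Real.pi ^ ((d:ℝ)/2) := step1.trans
        (Finset.sum_le_sum fun i _ => integral_abs_coord i)
    _ = d * Real.pi ^ ((d:ℝ)/2) := by
        rw [Finset.sum_const, Finset.card_univ, Fintype.card_fin, nsmul_eq_mul]

lemma opNorm_nonneg {d : ℕ} (S : Matrix (Fin d) (Fin d) ℝ) : 0 ≤ opNorm S :=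
  norm_nonneg _

lemma mApp_norm_le {d : ℕ} (S : Matrix (Fin d) (Fin d) ℝ) (u : Vec d) :
    ‖mApp S u‖ ≤ opNorm S * ‖u‖ :=
  (LinearMap.toContinuousLinearMap (Matrix.toEuclideanLin S)).le_opNorm u

lemma mApp_continuous {d : ℕ} (S : Matrix (Fin d) (Fin d) ℝ) :
    Continuous (mApp S) :=
  (LinearMap.toContinuousLinearMap (Matrix.toEuclideanLin S)).continuous

lemma one_le_opNorm_mul {d : ℕ} (S : Matrix (Fin d) (Fin d) ℝ) (hinv : IsUnit S.det)
    (hd : 0 < d) : 1 ≤ opNorm S * opNorm S⁻¹ := by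
  have : Nontrivial (Vec d) := by
    refine nontrivial_of_ne (EuclideanSpace.single ⟨0, hd⟩ (1:ℝ)) 0 ?_
    intro h
    have := congrArg (fun v : Vec d => v ⟨0, hd⟩) h
    simp [EuclideanSpace.single_apply] at this
  have hcomp : (LinearMap.toContinuousLinearMap (Matrix.toEuclideanLin S)).comp
      (LinearMap.toContinuousLinearMap (Matrix.toEuclideanLin S⁻¹)) =
      ContinuousLinearMap.id ℝ (Vec d) := by
    refine ContinuousLinearMap.ext fun u => ?_
    show Matrix.toEuclideanLin S (Matrix.toEuclideanLin S⁻¹ u) = u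
    apply (WithLp.equiv 2 (Fin d → ℝ)).injective
    simp [Matrix.ofLp_toEuclideanLin_apply, Matrix.toLin'_apply,
      Matrix.mulVec_mulVec, Matrix.mul_nonsing_inv S hinv]
  calc (1:ℝ) = ‖ContinuousLinearMap.id ℝ (Vec d)‖ := (ContinuousLinearMap.norm_id (E := Vec d)).symm
    _ = ‖(LinearMap.toContinuousLinearMap (Matrix.toEuclideanLin S)).comp
        (LinearMap.toContinuousLinearMap (Matrix.toEuclideanLin S⁻¹))‖ := by rw [hcomp]
    _ ≤ opNorm S * opNorm S⁻¹ := ContinuousLinearMap.opNorm_comp_le _ _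

lemma integrable_normsq_gauss {d : ℕ} :
    Integrable (fun u : Vec d => ‖u‖^2 * Real.exp (-‖u‖^2)) := by
  apply ((integrable_gauss (d := d) (b := 1/2) (by norm_num)).const_mul 2).mono'
  · apply Continuous.aestronglyMeasurable; fun_prop
  · refine Filter.Eventually.of_forall fun u => ?_
    rw [Real.norm_eq_abs, abs_of_nonneg (by positivity)]
    exact texp2 (norm_nonneg u)

lemma gradient_eq_symm_fderiv {d : ℕ} (h : Vec d → ℝ) (x : Vec d) :
    gradient h x = (InnerProductSpace.toDual ℝ (Vec d)).symm (fderiv ℝ h x) := rfl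

lemma norm_gradient_sub_eq {d : ℕ} (h g : Vec d → ℝ) (x y : Vec d) :
    ‖gradient h x - gradient g y‖ = ‖fderiv ℝ h x - fderiv ℝ g y‖ := by
  rw [gradient_eq_symm_fderiv, gradient_eq_symm_fderiv, ← map_sub,
    LinearIsometryEquiv.norm_map]

lemma f_growth {d : ℕ} {f : Vec d → ℝ} {L : ℝ} (hL0 : 0 ≤ L)
    (hdiff : Differentiable ℝ f)
    (hLip : ∀ x y : Vec d, ‖fderiv ℝ f x - fderiv ℝ f y‖ ≤ L * ‖x - y‖)
    (y z : Vec d) :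
    |f y - f z| ≤ (‖fderiv ℝ f z‖ + L * ‖y - z‖) * ‖y - z‖ := by
  have hconv : Convex ℝ (Metric.closedBall z ‖y - z‖) := convex_closedBall _ _
  have hbound : ∀ w ∈ Metric.closedBall z ‖y - z‖,
      ‖fderiv ℝ f w‖ ≤ ‖fderiv ℝ f z‖ + L * ‖y - z‖ := by
    intro w hw
    rw [Metric.mem_closedBall, dist_eq_norm] at hw
    calc ‖fderiv ℝ f w‖ ≤ ‖fderiv ℝ f z‖ + ‖fderiv ℝ f w - fderiv ℝ f z‖ := by
          have := norm_sub_norm_le (fderiv ℝ f w) (fderiv ℝ f z); linarith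
      _ ≤ ‖fderiv ℝ f z‖ + L * ‖w - z‖ := by linarith [hLip w z]
      _ ≤ ‖fderiv ℝ f z‖ + L * ‖y - z‖ := by nlinarith [mul_le_mul_of_nonneg_left hw hL0]
  have := hconv.norm_image_sub_le_of_norm_fderiv_le
    (fun w _ => hdiff w) hbound
    (Metric.mem_closedBall_self (norm_nonneg _))
    (by rw [Metric.mem_closedBall, dist_eq_norm])
  simpa [Real.norm_eq_abs] using this

lemma grad_smooth_close {d : ℕ} (f : Vec d → ℝ) (L : ℝ) (hL0 : 0 ≤ L)
    (hdiff : Differentiable ℝ f)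
    (hLip : ∀ x y : Vec d, ‖fderiv ℝ f x - fderiv ℝ f y‖ ≤ L * ‖x - y‖)
    (S : Matrix (Fin d) (Fin d) ℝ) (x : Vec d) :
    ‖gradient (gsmooth f S) x - gradient f x‖ ≤ L * opNorm S * d := by
  set κ := opNorm S with hκ
  have hκ0 : 0 ≤ κ := opNorm_nonneg S
  set c : ℝ := (Real.pi ^ ((d : ℝ) / 2))⁻¹ with hc
  have hπpos : (0:ℝ) < Real.pi ^ ((d : ℝ) / 2) := Real.rpow_pos_of_pos Real.pi_pos _
  have hcpos : 0 < c := inv_pos.2 hπpos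
  have hc1 : c * Real.pi ^ ((d : ℝ) / 2) = 1 := inv_mul_cancel₀ hπpos.ne'
  set D : Vec d → (Vec d →L[ℝ] ℝ) := fun y => fderiv ℝ f y with hD
  have hDcont : Continuous D := by
    have : LipschitzWith L.toNNReal D := by
      apply LipschitzWith.of_dist_le_mul
      intro a b
      rw [dist_eq_norm, dist_eq_norm]
      exact (hLip a b).trans (mul_le_mul_of_nonneg_right
        (Real.le_coe_toNNReal L) (norm_nonneg _))
    exact this.continuous
  set B : ℝ := ‖D x‖ with hB
  -- integrability of the derivative integrand at any point x'
  have hI1 : ∀ x' : Vec d, Integrable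
      (fun u : Vec d => Real.exp (-‖u‖^2) • D (x' + mApp S u)) := by
    intro x'
    apply Integrable.mono'
      (((integrable_gauss (d := d) (b := 1) one_pos).const_mul
        (B + L * ‖x' - x‖)).add (integrable_norm_gauss.const_mul (L * κ)))
    · apply Continuous.aestronglyMeasurable
      apply Continuous.fun_smul (by fun_prop)
      exact hDcont.comp (continuous_const.add (mApp_continuous S))
    · refine Filter.Eventually.of_forall fun u => ?_
      simp only [Pi.add_apply, neg_one_mul]
      rw [norm_smul (Real.exp (-‖u‖^2)) (D (x' + mApp S u)), Real.norm_eq_abs,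
        abs_of_pos (Real.exp_pos _)]
      have hd1 : ‖D (x' + mApp S u)‖ ≤ B + L * ‖x' - x‖ + L * κ * ‖u‖ := by
        have h1 := hLip (x' + mApp S u) x
        have h2 : ‖x' + mApp S u - x‖ ≤ ‖x' - x‖ + κ * ‖u‖ := by
          calc ‖x' + mApp S u - x‖ = ‖(x' - x) + mApp S u‖ := by
                rw [show x' + mApp S u - x = (x' - x) + mApp S u by abel]
            _ ≤ ‖x' - x‖ + ‖mApp S u‖ := norm_add_le _ _
            _ ≤ ‖x' - x‖ + κ * ‖u‖ := by linarith [mApp_norm_le S u]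
        have h3 := norm_sub_norm_le (D (x' + mApp S u)) (D x)
        have h4 := mul_le_mul_of_nonneg_left h2 hL0
        simp only [← hD] at h1 h3 ⊢
        nlinarith
      have hexp := (Real.exp_pos (-‖u‖^2)).le
      have := mul_le_mul_of_nonneg_left hd1 hexp
      calc Real.exp (-‖u‖^2) * ‖D (x' + mApp S u)‖
          ≤ Real.exp (-‖u‖^2) * (B + L * ‖x' - x‖ + L * κ * ‖u‖) := this
        _ = (B + L * ‖x' - x‖) * Real.exp (-‖u‖^2)
            + L * κ * (‖u‖ * Real.exp (-‖u‖^2)) := by ring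
  -- integrability of the function integrand at any point x'
  have hF_int : ∀ x' : Vec d, Integrable
      (fun u : Vec d => f (x' + mApp S u) * Real.exp (-‖u‖^2)) := by
    intro x'
    have hbd : ∀ u : Vec d, |f (x' + mApp S u)| ≤
        |f x'| + (‖D x'‖ + L * (κ * ‖u‖)) * (κ * ‖u‖) := by
      intro u
      have h1 := f_growth hL0 hdiff hLip (x' + mApp S u) x'
      have h2 : x' + mApp S u - x' = mApp S u := by abel
      rw [h2] at h1
      have h3 : ‖mApp S u‖ ≤ κ * ‖u‖ := mApp_norm_le S u
      have habs := abs_sub_abs_le_abs_sub (f (x' + mApp S u)) (f x')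
      have h5 : (‖D x'‖ + L * ‖mApp S u‖) * ‖mApp S u‖ ≤
          (‖D x'‖ + L * (κ * ‖u‖)) * (κ * ‖u‖) := by
        apply mul_le_mul
        · nlinarith [mul_le_mul_of_nonneg_left h3 hL0]
        · exact h3
        · exact norm_nonneg _
        · positivity
      nlinarith
    apply Integrable.mono'
      ((((integrable_gauss (d := d) (b := 1) one_pos).const_mul |f x'|).add
        (integrable_norm_gauss.const_mul (‖D x'‖ * κ))).add
        (integrable_normsq_gauss.const_mul (L * κ^2)))
    · apply Continuous.aestronglyMeasurable
      apply Continuous.mul _ (by fun_prop)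
      exact (hdiff.continuous).comp (continuous_const.add (mApp_continuous S))
    · refine Filter.Eventually.of_forall fun u => ?_
      simp only [Pi.add_apply, neg_one_mul]
      rw [Real.norm_eq_abs, abs_mul, abs_of_pos (Real.exp_pos _)]
      have := mul_le_mul_of_nonneg_right (hbd u) (Real.exp_pos (-‖u‖^2)).le
      calc |f (x' + mApp S u)| * Real.exp (-‖u‖^2)
          ≤ (|f x'| + (‖D x'‖ + L * (κ * ‖u‖)) * (κ * ‖u‖)) * Real.exp (-‖u‖^2) := this
        _ = |f x'| * Real.exp (-‖u‖^2) + ‖D x'‖ * κ * (‖u‖ * Real.exp (-‖u‖^2))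
            + L * κ^2 * (‖u‖^2 * Real.exp (-‖u‖^2)) := by ring
  -- differentiation under the integral sign
  have hkey : HasFDerivAt (fun x' => ∫ u : Vec d, f (x' + mApp S u) * Real.exp (-‖u‖^2))
      (∫ u : Vec d, Real.exp (-‖u‖^2) • D (x + mApp S u)) x := by
    apply hasFDerivAt_integral_of_dominated_of_fderiv_le
      (F' := fun x' (u : Vec d) => Real.exp (-‖u‖^2) • D (x' + mApp S u))
      (bound := fun u : Vec d => (B + L) * Real.exp (-‖u‖^2)
        + L * κ * (‖u‖ * Real.exp (-‖u‖^2)))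
      (s := Metric.ball x 1) (Metric.ball_mem_nhds x one_pos)
    · refine Filter.Eventually.of_forall fun x' => ?_
      apply Continuous.aestronglyMeasurable
      apply Continuous.mul _ (by fun_prop)
      exact (hdiff.continuous).comp (continuous_const.add (mApp_continuous S))
    · exact hF_int x
    · apply Continuous.aestronglyMeasurable
      apply Continuous.fun_smul (by fun_prop)
      exact hDcont.comp (continuous_const.add (mApp_continuous S))
    · refine Filter.Eventually.of_forall fun u => fun x' hx' => ?_
      rw [Metric.mem_ball, dist_eq_norm] at hx'
      rw [norm_smul (Real.exp (-‖u‖^2)) (D (x' + mApp S u)), Real.norm_eq_abs,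
        abs_of_pos (Real.exp_pos _)]
      have hd1 : ‖D (x' + mApp S u)‖ ≤ B + L + L * κ * ‖u‖ := by
        have h1 := hLip (x' + mApp S u) x
        have h2 : ‖x' + mApp S u - x‖ ≤ ‖x' - x‖ + κ * ‖u‖ := by
          calc ‖x' + mApp S u - x‖ = ‖(x' - x) + mApp S u‖ := by
                rw [show x' + mApp S u - x = (x' - x) + mApp S u by abel]
            _ ≤ ‖x' - x‖ + ‖mApp S u‖ := norm_add_le _ _
            _ ≤ ‖x' - x‖ + κ * ‖u‖ := by linarith [mApp_norm_le S u]
        have h3 := norm_sub_norm_le (D (x' + mApp S u)) (D x)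
        have h4 := mul_le_mul_of_nonneg_left h2 hL0
        simp only [← hD] at h1 h3 ⊢
        nlinarith [mul_le_mul_of_nonneg_left hx'.le hL0, hL0, hκ0, norm_nonneg u]
      have := mul_le_mul_of_nonneg_left hd1 (Real.exp_pos (-‖u‖^2)).le
      calc Real.exp (-‖u‖^2) * ‖D (x' + mApp S u)‖
          ≤ Real.exp (-‖u‖^2) * (B + L + L * κ * ‖u‖) := this
        _ = (B + L) * Real.exp (-‖u‖^2) + L * κ * (‖u‖ * Real.exp (-‖u‖^2)) := by ring
    · exact (((integrable_gauss (d := d) (b := 1) one_pos).const_mul (B + L)).add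
        (integrable_norm_gauss.const_mul (L * κ))).congr
        (Filter.Eventually.of_forall fun u => by simp [neg_one_mul])
    · refine Filter.Eventually.of_forall fun u => fun x' _ => ?_
      have h0 : HasFDerivAt (fun y : Vec d => y + mApp S u)
          (ContinuousLinearMap.id ℝ (Vec d)) x' := (hasFDerivAt_id x').add_const _
      have hc' := ((hdiff (x' + mApp S u)).hasFDerivAt.comp x' h0)
      rw [ContinuousLinearMap.comp_id] at hc'
      exact hc'.mul_const (Real.exp (-‖u‖^2))
  have hg : HasFDerivAt (gsmooth f S)
      (c • ∫ u : Vec d, Real.exp (-‖u‖^2) • D (x + mApp S u)) x := by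
    have := hkey.const_mul c
    exact this
  have hgd := hg.fderiv
  -- compute the difference
  have hρint : Integrable (fun u : Vec d => Real.exp (-‖u‖^2)) := by
    have := integrable_gauss (d := d) (b := 1) one_pos
    simpa using this
  have hsum : fderiv ℝ (gsmooth f S) x - D x =
      c • ∫ u : Vec d, Real.exp (-‖u‖^2) • (D (x + mApp S u) - D x) := by
    have e1 : ∫ u : Vec d, Real.exp (-‖u‖^2) • (D (x + mApp S u) - D x) =
        (∫ u : Vec d, Real.exp (-‖u‖^2) • D (x + mApp S u))
          - (∫ u : Vec d, Real.exp (-‖u‖^2) • D x) := by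
      rw [← MeasureTheory.integral_sub (hI1 x) (hρint.smul_const (D x))]
      congr 1; funext u; rw [smul_sub]
    have e2 : (∫ u : Vec d, Real.exp (-‖u‖^2) • D x) =
        (Real.pi ^ ((d : ℝ) / 2)) • D x := by
      rw [integral_smul_const, integral_gauss_vec]
    rw [e1, smul_sub, e2, smul_smul, hc1, one_smul, hgd]
  have hnorm : ‖fderiv ℝ (gsmooth f S) x - D x‖ ≤ L * κ * d := by
    rw [hsum, norm_smul c (∫ u : Vec d, Real.exp (-‖u‖^2) • (D (x + mApp S u) - D x)),
      Real.norm_eq_abs, abs_of_pos hcpos]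
    have hle : ‖∫ u : Vec d, Real.exp (-‖u‖^2) • (D (x + mApp S u) - D x)‖
        ≤ ∫ u : Vec d, L * κ * (‖u‖ * Real.exp (-‖u‖^2)) := by
      apply (MeasureTheory.norm_integral_le_integral_norm _).trans
      apply MeasureTheory.integral_mono
      · exact ((hI1 x).sub (hρint.smul_const (D x))).norm.congr
          (Filter.Eventually.of_forall fun u => by
            simp only [Pi.sub_apply]; rw [smul_sub])
      · exact integrable_norm_gauss.const_mul (L * κ)
      · intro u
        show ‖Real.exp (-‖u‖^2) • (D (x + mApp S u) - D x)‖
          ≤ L * κ * (‖u‖ * Real.exp (-‖u‖^2))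
        rw [norm_smul (Real.exp (-‖u‖^2)) (D (x + mApp S u) - D x), Real.norm_eq_abs,
          abs_of_pos (Real.exp_pos _)]
        have h1 := hLip (x + mApp S u) x
        have h2 : ‖x + mApp S u - x‖ ≤ κ * ‖u‖ := by
          rw [show x + mApp S u - x = mApp S u by abel]
          exact mApp_norm_le S u
        have h3 : ‖D (x + mApp S u) - D x‖ ≤ L * (κ * ‖u‖) := by
          simp only [← hD] at h1
          exact h1.trans (mul_le_mul_of_nonneg_left h2 hL0)
        calc Real.exp (-‖u‖^2) * ‖D (x + mApp S u) - D x‖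
            ≤ Real.exp (-‖u‖^2) * (L * (κ * ‖u‖)) :=
              mul_le_mul_of_nonneg_left h3 (Real.exp_pos _).le
          _ = L * κ * (‖u‖ * Real.exp (-‖u‖^2)) := by ring
    have hval : ∫ u : Vec d, L * κ * (‖u‖ * Real.exp (-‖u‖^2))
        ≤ L * κ * (d * Real.pi ^ ((d : ℝ) / 2)) := by
      rw [integral_const_mul]
      exact mul_le_mul_of_nonneg_left integral_norm_gauss_le (by positivity)
    calc c * ‖∫ u : Vec d, Real.exp (-‖u‖^2) • (D (x + mApp S u) - D x)‖
        ≤ c * (L * κ * (d * Real.pi ^ ((d : ℝ) / 2))) := by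
          apply mul_le_mul_of_nonneg_left (hle.trans hval) hcpos.le
      _ = L * κ * d * (c * Real.pi ^ ((d : ℝ) / 2)) := by ring
      _ = L * κ * d := by rw [hc1, mul_one]
  rw [norm_gradient_sub_eq]
  exact hnorm

/-- squared-gradient comparison between `f` and `f_Σ`, in both directions. -/
theorem stmt_9 {d : ℕ} (f : Vec d → ℝ) (L : ℝ)
    (hdiff : Differentiable ℝ f)
    (hL : ∀ x y : Vec d, ‖gradient f x - gradient f y‖ ≤ L * ‖x - y‖)
    (S : Matrix (Fin d) (Fin d) ℝ) (hsymm : S.IsSymm) (hinv : IsUnit S.det) :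
    ∀ x : Vec d,
      ‖gradient f x‖ ^ 2 ≤ 2 * ‖gradient (gsmooth f S) x‖ ^ 2 +
        L ^ 2 * opNorm S ^ 4 * opNorm S⁻¹ ^ 2 * ((3 : ℝ) + d) ^ 3 / 4 ∧
      ‖gradient (gsmooth f S) x‖ ^ 2 ≤ 2 * ‖gradient f x‖ ^ 2 +
        L ^ 2 * opNorm S ^ 4 * opNorm S⁻¹ ^ 2 * ((3 : ℝ) + d) ^ 3 / 4 := by
  intro x
  rcases Nat.eq_zero_or_pos d with hd | hd
  · subst hd
    have h0 : ∀ v : Vec 0, ‖v‖ = 0 := fun v => by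
      rw [show v = 0 from Subsingleton.elim v 0, norm_zero]
    rw [h0 (gradient f x), h0 (gradient (gsmooth f S) x)]
    have hC : (0:ℝ) ≤ L ^ 2 * opNorm S ^ 4 * opNorm S⁻¹ ^ 2 * ((3:ℝ) + (0:ℕ)) ^ 3 / 4 := by
      positivity
    constructor <;> nlinarith
  · have hL0 : 0 ≤ L := by
      have h1 := hL (EuclideanSpace.single (⟨0, hd⟩ : Fin d) (1:ℝ)) 0
      have h2 : ‖(EuclideanSpace.single (⟨0, hd⟩ : Fin d) (1:ℝ)) - (0 : Vec d)‖ = 1 := by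
        rw [sub_zero, EuclideanSpace.norm_single, norm_one]
      rw [h2, mul_one] at h1
      exact le_trans (norm_nonneg _) h1
    have hLip : ∀ a b : Vec d, ‖fderiv ℝ f a - fderiv ℝ f b‖ ≤ L * ‖a - b‖ := by
      intro a b
      rw [← norm_gradient_sub_eq f f a b]
      exact hL a b
    have hclose := grad_smooth_close f L hL0 hdiff hLip S x
    set κ := opNorm S with hκ
    set κ' := opNorm S⁻¹ with hκ'
    have hκ0 : 0 ≤ κ := opNorm_nonneg S
    have hκ'0 : 0 ≤ κ' := opNorm_nonneg S⁻¹
    have hκκ : 1 ≤ κ * κ' := one_le_opNorm_mul S hinv hd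
    have hd1 : (1:ℝ) ≤ d := by exact_mod_cast hd
    set a := ‖gradient f x‖ with ha
    set b := ‖gradient (gsmooth f S) x‖ with hb
    have ha0 : 0 ≤ a := norm_nonneg _
    have hb0 : 0 ≤ b := norm_nonneg _
    set M := L * κ * d with hM
    have hM0 : 0 ≤ M := by positivity
    have t1 : a ≤ b + M := by
      have h3 : a - b ≤ ‖gradient f x - gradient (gsmooth f S) x‖ := norm_sub_norm_le _ _
      rw [norm_sub_rev] at h3
      linarith
    have t2 : b ≤ a + M := by
      have h3 : b - a ≤ ‖gradient (gsmooth f S) x - gradient f x‖ := norm_sub_norm_le _ _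
      linarith
    have h8 : 8 * (d:ℝ)^2 ≤ (3 + d)^3 := by nlinarith
    have hκκ2 : 1 ≤ (κ * κ')^2 := by nlinarith
    have hM2 : 2 * M^2 ≤ L^2 * κ^4 * κ'^2 * ((3:ℝ) + d)^3 / 4 := by
      have e1 : L^2 * κ^4 * κ'^2 = (L^2 * κ^2) * (κ * κ')^2 := by ring
      have e2 : 2 * M^2 = (L^2 * κ^2) * (8 * (d:ℝ)^2) / 4 := by rw [hM]; ring
      rw [e1, e2]
      have hLκ : 0 ≤ L^2 * κ^2 := by positivity
      have s1 : (L^2 * κ^2) * (8 * (d:ℝ)^2) ≤ (L^2 * κ^2) * ((3:ℝ)+d)^3 :=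
        mul_le_mul_of_nonneg_left h8 hLκ
      have s2 : (L^2 * κ^2) * ((3:ℝ)+d)^3 ≤ ((L^2 * κ^2) * (κ*κ')^2) * ((3:ℝ)+d)^3 := by
        have h3d : (0:ℝ) ≤ (3+d)^3 := by positivity
        nlinarith [mul_le_mul_of_nonneg_left hκκ2 hLκ]
      linarith
    constructor
    · nlinarith [sq_nonneg (b - M)]
    · nlinarith [sq_nonneg (a - M)]
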